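/- Let P be the triangular prism, i.e., the cubic graph with vertices a, b, c, a', b', c', triangle edges ab, bc, ca and a'b', b'c', c'a', and matching edges aa', bb', cc'. Let H be the graph obtained from P by subdividing the edge aa' (an edge contained in no triangle) with one new vertex s. Then the square H² of H is the complete graph on the 7 vertices of H; in particular, the chromatic number of H² equals 7. -/

import Mathlib

/-- The square of a graph: two distinct vertices are adjacent iff their
distance in `G` is at most 2 (adjacent, or having a common neighbor). -/
def graphSquare {V : Type*} (G : SimpleGraph V) : SimpleGraph V where
  Adj u v := u ≠ v ∧ (G.Adj u v ∨ ∃ w, G.Adj u w ∧ G.Adj w v)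
  symm := ⟨by
    rintro u v ⟨hne, h | ⟨w, h1, h2⟩⟩
    · exact ⟨hne.symm, Or.inl h.symm⟩
    · exact ⟨hne.symm, Or.inr ⟨w, h2.symm, h1.symm⟩⟩⟩
  loopless := ⟨by rintro u ⟨hne, -⟩; exact hne rfl⟩

/-- The edges of the graph `H` obtained from the triangular prism with
vertices `a = 0, b = 1, c = 2, a' = 3, b' = 4, c' = 5` (triangles `a b c`
and `a' b' c'`, matching edges `a a'`, `b b'`, `c c'`) by subdividing the
edge `a a'` (which lies in no triangle) with a new vertex `s = 6`. -/
def subdividedPrismEdges : List (Fin 7 × Fin 7) :=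
  [(0, 1), (1, 2), (2, 0), (3, 4), (4, 5), (5, 3), (1, 4), (2, 5), (0, 6), (6, 3)]

/-- The triangular prism with the edge `a a'` subdivided by the vertex `s = 6`. -/
def subdividedPrism : SimpleGraph (Fin 7) where
  Adj u v := (u, v) ∈ subdividedPrismEdges ∨ (v, u) ∈ subdividedPrismEdges
  symm := ⟨fun _ _ h => h.symm⟩
  loopless := ⟨fun u => by fin_cases u <;> decide⟩

instance : DecidableRel subdividedPrism.Adj := fun u v =>
  decidable_of_iff ((u, v) ∈ subdividedPrismEdges ∨ (v, u) ∈ subdividedPrismEdges) Iff.rfl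

/-- The square of the subdivided triangular prism is the complete graph on its
7 vertices; in particular its chromatic number equals 7. -/
theorem square_subdividedPrism_eq_top_and_chromaticNumber :
    graphSquare subdividedPrism = ⊤ ∧
      (graphSquare subdividedPrism).chromaticNumber = 7 := by
  have h : graphSquare subdividedPrism = ⊤ := by
    ext u v
    show (u ≠ v ∧ _) ↔ u ≠ v
    revert u v
    decide
  refine ⟨h, ?_⟩
  rw [h, SimpleGraph.chromaticNumber_top]
  simp
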